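/- Let q be a prime power, b a positive integer, f ∈ F_q[x] a monic irreducible polynomial of degree d, and A = ⊕_{i=1}^t C_f ∈ F_q^{n×n} with n = td. Then for any U ∈ F_q^{b×n} and V ∈ F_q^{n×b}, with U_i ∈ F_q^{b×d} and V_i ∈ F_q^{d×b} the blocks of U and V conforming to the diagonal blocks of A, minpoly(U·Ā·V) = f if the sequence Σ_{i=1}^t U_i·C̄_f·V_i is nonzero and minpoly(U·Ā·V) = 1 otherwise; hence P(A) equals the fraction of pairs (U, V) for which Σ_{i=1}^t U_i·C̄_f·V_i ≠ 0. -/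

import Mathlib

open Matrix Polynomial

/-- `p` annihilates the matrix sequence `S`, i.e. `p(S) = 0`:
for every `k`, `∑ i, (coeff p i) • S (i + k) = 0`. -/
def AnnPoly {F : Type} [Field F] {α β : Type} (p : Polynomial F)
    (S : ℕ → Matrix α β F) : Prop :=
  ∀ k : ℕ, (p.sum fun i a => a • S (i + k)) = 0

open scoped Classical in
/-- The minimal generating polynomial of a matrix sequence: the unique monic
polynomial annihilating `S` that divides every annihilator of `S`
(`0` if no such polynomial exists). -/
noncomputable def seqMinpoly {F : Type} [Field F] {α β : Type}
    (S : ℕ → Matrix α β F) : Polynomial F :=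
  if h : ∃ p : Polynomial F, p.Monic ∧ AnnPoly p S ∧ ∀ g : Polynomial F, AnnPoly g S → p ∣ g
  then h.choose else 0

/-- `pmp F b A` : the fraction of pairs `(U, V)` for which the projected sequence
`(U * A^k * V)_k` has the same minimal polynomial as the sequence `(A^k)_k`. -/
noncomputable def pmp (F : Type) [Field F] [Fintype F] (b : ℕ)
    {ι : Type} [Fintype ι] [DecidableEq ι] (A : Matrix ι ι F) : ℚ :=
  (Nat.card {UV : Matrix (Fin b) ι F × Matrix ι (Fin b) F //
      seqMinpoly (fun k => UV.1 * A ^ k * UV.2) = seqMinpoly (fun k => A ^ k)} : ℚ) /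
  (Nat.card (Matrix (Fin b) ι F × Matrix ι (Fin b) F) : ℚ)

/-- The companion matrix of a monic polynomial `f` of degree `d`:
ones on the subdiagonal, last column `(-f_0, …, -f_{d-1})ᵀ`. -/
def companion {F : Type} [Field F] (d : ℕ) (f : Polynomial F) :
    Matrix (Fin d) (Fin d) F :=
  Matrix.of fun i j => (if (i : ℕ) = (j : ℕ) + 1 then 1 else 0) +
    (if (j : ℕ) = d - 1 then -f.coeff (i : ℕ) else 0)

/-- The Jordan block `J_{f^e}` of `f^e` (`f` of degree `d`): `e` diagonal blocks `C_f`
and identity blocks on the first block subdiagonal. -/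
def jordanBlock {F : Type} [Field F] (d e : ℕ) (f : Polynomial F) :
    Matrix (Fin e × Fin d) (Fin e × Fin d) F :=
  Matrix.of fun p q =>
    if p.1 = q.1 then companion d f p.2 q.2
    else if (p.1 : ℕ) = (q.1 : ℕ) + 1 then (if p.2 = q.2 then 1 else 0) else 0

/-- `blockSum C U V` is the sequence `k ↦ ∑ᵢ Uᵢ · Cᵏ · Vᵢ`, where `Uᵢ, Vᵢ` are the
blocks of `U, V` conforming to the diagonal blocks of `⊕_{i=1}^t C`. -/
def blockSum {F : Type} [Field F] {b d t : ℕ} (C : Matrix (Fin d) (Fin d) F)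
    (U : Matrix (Fin b) (Fin d × Fin t) F) (V : Matrix (Fin d × Fin t) (Fin b) F)
    (k : ℕ) : Matrix (Fin b) (Fin b) F :=
  ∑ i : Fin t,
    (Matrix.of fun r c => U r (c, i)) * C ^ k * (Matrix.of fun c r => V (c, i) r)

namespace Stmt8Aux


variable {F : Type} [Field F] {α β γ δ : Type}

/-- shift endomorphism on sequences -/
def shiftE (F : Type) [Field F] (α β : Type) : Module.End F (ℕ → Matrix α β F) where
  toFun S := fun k => S (k + 1)
  map_add' _ _ := rfl
  map_smul' _ _ := rfl

lemma shiftE_pow (i : ℕ) : ∀ S : ℕ → Matrix α β F,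
    ((shiftE F α β) ^ i) S = fun k => S (k + i) := by
  induction i with
  | zero => intro S; rfl
  | succ n ih =>
    intro S
    rw [pow_succ, Module.End.mul_apply, ih]
    funext k
    rfl

lemma annpoly_iff (p : Polynomial F) (S : ℕ → Matrix α β F) :
    AnnPoly p S ↔ (aeval (shiftE F α β) p) S = 0 := by
  have h : ∀ k, ((aeval (shiftE F α β) p) S) k = p.sum fun i a => a • S (i + k) := by
    intro k
    rw [aeval_def, eval₂_eq_sum, Polynomial.sum_def, Polynomial.sum_def]
    rw [LinearMap.sum_apply, Finset.sum_apply]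
    refine Finset.sum_congr rfl fun i _ => ?_
    rw [Module.End.mul_apply, Module.algebraMap_end_apply]
    simp [shiftE_pow, add_comm k i]
  constructor
  · intro hp; funext k; rw [h k, hp k]; rfl
  · intro hp k; rw [← h k, hp]; rfl

lemma annpoly_add {p q : Polynomial F} {S : ℕ → Matrix α β F}
    (hp : AnnPoly p S) (hq : AnnPoly q S) : AnnPoly (p + q) S := by
  rw [annpoly_iff] at *
  rw [map_add, LinearMap.add_apply, hp, hq, add_zero]

lemma annpoly_mul (h : Polynomial F) {g : Polynomial F} {S : ℕ → Matrix α β F}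
    (hg : AnnPoly g S) : AnnPoly (h * g) S := by
  rw [annpoly_iff] at *
  rw [_root_.map_mul, Module.End.mul_apply, hg, map_zero]

lemma annpoly_of_seq_zero {p : Polynomial F} {S : ℕ → Matrix α β F}
    (hS : ∀ k, S k = 0) : AnnPoly p S := by
  intro k
  rw [Polynomial.sum_def]
  simp [hS]

lemma annpoly_one {S : ℕ → Matrix α β F} (h : AnnPoly 1 S) : ∀ k, S k = 0 := by
  intro k
  have h1 := h k
  rw [show (1 : Polynomial F) = Polynomial.C 1 from (_root_.map_one Polynomial.C).symm,
    Polynomial.sum_C_index (by simp)] at h1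
  simpa using h1

lemma annpoly_linear (L : Matrix α β F →ₗ[F] Matrix γ δ F) {p : Polynomial F}
    {S : ℕ → Matrix α β F} (hp : AnnPoly p S) : AnnPoly p (fun k => L (S k)) := by
  intro k
  rw [Polynomial.sum_def]
  have : ∑ i ∈ p.support, p.coeff i • L (S (i + k))
      = L (∑ i ∈ p.support, p.coeff i • S (i + k)) := by
    rw [map_sum]; simp
  have h0 := hp k
  rw [Polynomial.sum_def] at h0
  rw [this, h0, map_zero]

lemma annpoly_pow_of_aeval [Fintype α] [DecidableEq α] {A : Matrix α α F} {p : Polynomial F}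
    (hp : aeval A p = 0) : AnnPoly p (fun k => A ^ k) := by
  intro k
  have : (p.sum fun i a => a • A ^ (i + k)) = (aeval A p) * A ^ k := by
    rw [aeval_def, eval₂_eq_sum, Polynomial.sum_def, Polynomial.sum_def, Finset.sum_mul]
    refine Finset.sum_congr rfl fun i _ => ?_
    rw [pow_add, ← smul_mul_assoc, Algebra.smul_def]
  rw [this, hp, zero_mul]

lemma ann_dvd {f g : Polynomial F} {S : ℕ → Matrix α β F} (hirr : Irreducible f)
    (hf : AnnPoly f S) (hS : ∃ k, S k ≠ 0) (hg : AnnPoly g S) : f ∣ g := by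
  classical
  set G := EuclideanDomain.gcd f g with hGdef
  have hG : AnnPoly G S := by
    rw [hGdef, EuclideanDomain.gcd_eq_gcd_ab f g]
    exact annpoly_add (mul_comm f _ ▸ annpoly_mul _ hf) (mul_comm g _ ▸ annpoly_mul _ hg)
  obtain ⟨c, hc⟩ := EuclideanDomain.gcd_dvd_left f g
  rw [← hGdef] at hc
  have h2 : G ∣ g := hGdef ▸ EuclideanDomain.gcd_dvd_right f g
  rcases hirr.isUnit_or_isUnit hc with hu | hu
  · exfalso
    obtain ⟨v, hv⟩ := hu.exists_left_inv
    obtain ⟨k, hk⟩ := hS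
    exact hk (annpoly_one (hv ▸ annpoly_mul v hG) k)
  · obtain ⟨v, hv⟩ := hu.exists_right_inv
    exact dvd_trans ⟨v, by rw [hc, mul_assoc, hv, mul_one]⟩ h2

variable {F : Type} [Field F]

lemma sum_mulVec {n m : Type} [Fintype m] {ι : Type} (s : Finset ι)
    (M : ι → Matrix n m F) (v : m → F) :
    (∑ i ∈ s, M i) *ᵥ v = ∑ i ∈ s, (M i) *ᵥ v := by
  ext r
  simp [Matrix.mulVec, dotProduct, Matrix.sum_apply, Finset.sum_mul]
  rw [Finset.sum_comm]

lemma companion_step (f : Polynomial F) (d : ℕ) (j : ℕ) (h : j + 1 < d) :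
    (companion d f) *ᵥ Pi.single (⟨j, by omega⟩ : Fin d) 1
      = Pi.single (⟨j + 1, h⟩ : Fin d) 1 := by
  funext i
  rw [Matrix.mulVec_single]
  have hj : j ≠ d - 1 := by omega
  simp only [companion, Matrix.of_apply, hj, if_false, add_zero, mul_one,
    Pi.single_apply]
  by_cases hij : (i : ℕ) = j + 1
  · simp [hij, Fin.ext_iff, hj]
  · simp [hij, Fin.ext_iff, hj]

lemma companion_last (f : Polynomial F) (d : ℕ) (hd0 : 0 < d) :
    (companion d f) *ᵥ Pi.single (⟨d - 1, by omega⟩ : Fin d) 1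
      = fun i : Fin d => -f.coeff (i : ℕ) := by
  funext i
  rw [Matrix.mulVec_single]
  have hi : (i : ℕ) ≠ (d - 1) + 1 := by have := i.isLt; omega
  simp [companion, hi]

lemma companion_pow (f : Polynomial F) (d : ℕ) (hd0 : 0 < d) :
    ∀ k, ∀ h : k < d, ((companion d f) ^ k) *ᵥ Pi.single (⟨0, hd0⟩ : Fin d) 1
      = Pi.single (⟨k, h⟩ : Fin d) 1 := by
  intro k
  induction k with
  | zero =>
    intro h
    rw [pow_zero]
    exact Matrix.one_mulVec _
  | succ n ih =>
    intro h
    rw [pow_succ', ← Matrix.mulVec_mulVec, ih (by omega)]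
    exact companion_step f d n h

lemma companion_aeval_mulVec (f : Polynomial F) (hmonic : f.Monic) (d : ℕ)
    (hd : d = f.natDegree) (hd0 : 0 < d) :
    (aeval (companion d f) f) *ᵥ Pi.single (⟨0, hd0⟩ : Fin d) 1 = 0 := by
  set C := companion d f
  rw [Polynomial.aeval_eq_sum_range, ← hd]
  rw [sum_mulVec]
  have hterm : ∀ i ∈ Finset.range (d + 1),
      (f.coeff i • C ^ i) *ᵥ Pi.single (⟨0, hd0⟩ : Fin d) 1
        = f.coeff i • ((C ^ i) *ᵥ Pi.single (⟨0, hd0⟩ : Fin d) 1) := by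
    intro i _
    rw [Matrix.smul_mulVec]
  rw [Finset.sum_congr rfl hterm, Finset.sum_range_succ]
  have hlast : (C ^ d) *ᵥ Pi.single (⟨0, hd0⟩ : Fin d) 1 = fun i : Fin d => -f.coeff (i : ℕ) := by
    have : C ^ d = C * C ^ (d - 1) := by
      rw [← pow_succ']
      congr 1
      omega
    rw [this, ← Matrix.mulVec_mulVec, companion_pow f d hd0 (d-1) (by omega)]
    exact companion_last f d hd0
  have hcd : f.coeff d = 1 := by rw [hd]; exact hmonic.coeff_natDegree
  rw [hlast, hcd, one_smul]
  have hsum : ∀ i ∈ Finset.range d,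
      f.coeff i • ((C ^ i) *ᵥ Pi.single (⟨0, hd0⟩ : Fin d) 1)
        = f.coeff i • (fun r : Fin d => if (r : ℕ) = i then (1:F) else 0) := by
    intro i hi
    rw [companion_pow f d hd0 i (Finset.mem_range.mp hi)]
    congr 1
    funext r
    simp [Pi.single_apply, Fin.ext_iff]
  rw [Finset.sum_congr rfl hsum]
  funext r
  simp only [Pi.add_apply, Pi.zero_apply, Finset.sum_apply, Pi.smul_apply, smul_eq_mul,
    mul_ite, mul_one, mul_zero]
  rw [Finset.sum_ite_eq (Finset.range d) (r : ℕ) f.coeff]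
  simp [r.isLt]

lemma companion_aeval (f : Polynomial F) (hmonic : f.Monic) (d : ℕ)
    (hd : d = f.natDegree) (hd0 : 0 < d) :
    aeval (companion d f) f = 0 := by
  set C := companion d f with hC
  have key : ∀ j : Fin d, (aeval C f) *ᵥ Pi.single j 1 = 0 := by
    intro j
    have hj : Pi.single j (1 : F) = (C ^ (j : ℕ)) *ᵥ Pi.single (⟨0, by omega⟩ : Fin d) 1 := by
      rw [companion_pow f d (by omega) (j : ℕ) j.isLt]
    rw [hj, Matrix.mulVec_mulVec]
    have hcomm : aeval C f * C ^ (j : ℕ) = C ^ (j : ℕ) * aeval C f := by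
      rw [show aeval C f * C ^ (j : ℕ) = aeval C (f * X ^ (j : ℕ)) by
          rw [_root_.map_mul, map_pow, aeval_X],
        show C ^ (j : ℕ) * aeval C f = aeval C (X ^ (j : ℕ) * f) by
          rw [_root_.map_mul, map_pow, aeval_X],
        mul_comm f]
    rw [hcomm, ← Matrix.mulVec_mulVec, companion_aeval_mulVec f hmonic d hd (by omega),
      Matrix.mulVec_zero]
  ext i j
  have h := key j
  rw [Matrix.mulVec_single] at h
  have h2 := congrFun h i
  simpa using h2


lemma seqMinpoly_eq {F : Type} [Field F] {α β : Type} {S : ℕ → Matrix α β F}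
    {m : Polynomial F} (hm : m.Monic) (ha : AnnPoly m S)
    (hdvd : ∀ g, AnnPoly g S → m ∣ g) : seqMinpoly S = m := by
  have h : ∃ p : Polynomial F, p.Monic ∧ AnnPoly p S ∧ ∀ g, AnnPoly g S → p ∣ g :=
    ⟨m, hm, ha, hdvd⟩
  rw [seqMinpoly, dif_pos h]
  obtain ⟨hp1, hp2, hp3⟩ := h.choose_spec
  exact Polynomial.eq_of_monic_of_associated hp1 hm
    (associated_of_dvd_dvd (hp3 m ha) (hdvd _ hp2))

/-- `blockDiagonal ∘ const` as an algebra hom. -/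
def bdAlgHom (F : Type) [Field F] (d t : ℕ) :
    Matrix (Fin d) (Fin d) F →ₐ[F] Matrix (Fin d × Fin t) (Fin d × Fin t) F :=
  { (Matrix.blockDiagonalRingHom (Fin d) (Fin t) F).comp
      (Pi.constRingHom (Fin t) (Matrix (Fin d) (Fin d) F)) with
    commutes' := fun r => by
      ext ⟨i, o⟩ ⟨j, o'⟩
      show Matrix.blockDiagonal (fun _ : Fin t => algebraMap F (Matrix (Fin d) (Fin d) F) r) (i, o) (j, o') = algebraMap F (Matrix (Fin d × Fin t) (Fin d × Fin t) F) r (i, o) (j, o')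
      simp only [RingHom.coe_comp, Function.comp_apply, Pi.constRingHom,
        RingHom.coe_mk, MonoidHom.coe_mk, OneHom.coe_mk,
        Matrix.blockDiagonalRingHom, Matrix.blockDiagonal_apply,
        Matrix.algebraMap_matrix_apply, Function.const_apply]
      by_cases ho : o = o' <;> by_cases hij : i = j <;>
        simp [Matrix.blockDiagonal_apply, ho, hij, Prod.ext_iff,
          Matrix.algebraMap_matrix_apply] }

lemma aeval_bd {F : Type} [Field F] {d t : ℕ} {C : Matrix (Fin d) (Fin d) F}
    {f : Polynomial F} (hC : Polynomial.aeval C f = 0) :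
    Polynomial.aeval (Matrix.blockDiagonal fun _ : Fin t => C) f = 0 := by
  have h1 : (Matrix.blockDiagonal fun _ : Fin t => C) = bdAlgHom F d t C := rfl
  rw [h1, Polynomial.aeval_algHom_apply, hC, map_zero]

lemma proj_eq_blockSum {F : Type} [Field F] {b d t : ℕ}
    (C : Matrix (Fin d) (Fin d) F) (U : Matrix (Fin b) (Fin d × Fin t) F)
    (V : Matrix (Fin d × Fin t) (Fin b) F) (k : ℕ) :
    U * (Matrix.blockDiagonal fun _ : Fin t => C) ^ k * V = blockSum C U V k := by
  have h1 : (Matrix.blockDiagonal fun _ : Fin t => C) ^ k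
      = Matrix.blockDiagonal (fun _ : Fin t => C ^ k) := by
    rw [← Matrix.blockDiagonal_pow]
    rfl
  rw [h1]
  ext r s
  simp only [blockSum, Matrix.mul_apply, Matrix.blockDiagonal_apply, Matrix.sum_apply,
    Matrix.of_apply, Fintype.sum_prod_type, Finset.sum_mul, Finset.mul_sum,
    mul_ite, mul_zero, ite_mul, zero_mul, Finset.sum_ite_eq, Finset.sum_ite_eq',
    Finset.mem_univ, if_true]
  rw [Finset.sum_comm]

/-- `M ↦ U * M * V` as a linear map. -/
def mulLR {F : Type} [Field F] {ι κ : Type} [Fintype ι]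
    (U : Matrix κ ι F) (V : Matrix ι κ F) : Matrix ι ι F →ₗ[F] Matrix κ κ F where
  toFun M := U * M * V
  map_add' M N := by
    show U * (M + N) * V = U * M * V + U * N * V
    rw [Matrix.mul_add, Matrix.add_mul]
  map_smul' c M := by
    show U * (c • M) * V = c • (U * M * V)
    rw [Matrix.mul_smul, Matrix.smul_mul]

end Stmt8Aux

/-- For `A = ⊕_{i=1}^t C_f` with `f` monic irreducible: for all `U, V`, the projected
sequence `U·Ā·V` has minpoly `f` when `∑ᵢ Uᵢ·C̄_f·Vᵢ ≠ 0` and minpoly `1` otherwise;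
hence `P(A)` is the fraction of pairs with `∑ᵢ Uᵢ·C̄_f·Vᵢ ≠ 0`. -/
theorem stmt8 (F : Type) [Field F] [Fintype F] (b t : ℕ) (hb : 0 < b) (ht : 0 < t)
    (f : Polynomial F) (hmonic : f.Monic) (hirr : Irreducible f)
    (d : ℕ) (hd : d = f.natDegree)
    (A : Matrix (Fin d × Fin t) (Fin d × Fin t) F)
    (hA : A = Matrix.blockDiagonal fun _ : Fin t => companion d f) :
    (∀ (U : Matrix (Fin b) (Fin d × Fin t) F) (V : Matrix (Fin d × Fin t) (Fin b) F),
      (blockSum (companion d f) U V ≠ 0 →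
        seqMinpoly (fun k => U * A ^ k * V) = f) ∧
      (blockSum (companion d f) U V = 0 →
        seqMinpoly (fun k => U * A ^ k * V) = 1)) ∧
    pmp F b A =
      (Nat.card {UV : Matrix (Fin b) (Fin d × Fin t) F × Matrix (Fin d × Fin t) (Fin b) F //
          blockSum (companion d f) UV.1 UV.2 ≠ 0} : ℚ) /
      (Nat.card (Matrix (Fin b) (Fin d × Fin t) F × Matrix (Fin d × Fin t) (Fin b) F) : ℚ) := by
  classical
  have hfne1 : f ≠ 1 := fun h => hirr.not_isUnit (h ▸ isUnit_one)
  have hd0 : 0 < d := by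
    rw [hd]
    rcases Nat.eq_zero_or_pos f.natDegree with h0 | h0
    · exact absurd (hmonic.natDegree_eq_zero.mp h0) hfne1
    · exact h0
  have hCf : aeval (companion d f) f = 0 := Stmt8Aux.companion_aeval f hmonic d hd hd0
  have hAf : aeval A f = 0 := by rw [hA]; exact Stmt8Aux.aeval_bd hCf
  have hannA : AnnPoly f (fun k => A ^ k) := Stmt8Aux.annpoly_pow_of_aeval hAf
  have hAne : ∃ k, (fun k => A ^ k) k ≠ 0 := by
    refine ⟨0, ?_⟩
    simp only [pow_zero]
    intro h
    have h1 : (1 : Matrix (Fin d × Fin t) (Fin d × Fin t) F) (⟨0, hd0⟩, ⟨0, ht⟩)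
        (⟨0, hd0⟩, ⟨0, ht⟩) = 0 := by rw [h]; rfl
    rw [Matrix.one_apply_eq] at h1
    exact one_ne_zero h1
  have hminA : seqMinpoly (fun k => A ^ k) = f :=
    Stmt8Aux.seqMinpoly_eq hmonic hannA fun g hg => Stmt8Aux.ann_dvd hirr hannA hAne hg
  have hpart1 : ∀ (U : Matrix (Fin b) (Fin d × Fin t) F) (V : Matrix (Fin d × Fin t) (Fin b) F),
      (blockSum (companion d f) U V ≠ 0 → seqMinpoly (fun k => U * A ^ k * V) = f) ∧
      (blockSum (companion d f) U V = 0 → seqMinpoly (fun k => U * A ^ k * V) = 1) := by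
    intro U V
    have hseq : ∀ k, U * A ^ k * V = blockSum (companion d f) U V k := by
      intro k; rw [hA]; exact Stmt8Aux.proj_eq_blockSum _ U V k
    have hannS : AnnPoly f (fun k => U * A ^ k * V) :=
      Stmt8Aux.annpoly_linear (Stmt8Aux.mulLR U V) hannA
    constructor
    · intro hne
      refine Stmt8Aux.seqMinpoly_eq hmonic hannS fun g hg => ?_
      refine Stmt8Aux.ann_dvd hirr hannS ?_ hg
      obtain ⟨k, hk⟩ := Function.ne_iff.mp hne
      exact ⟨k, by rw [hseq k]; exact hk⟩
    · intro h0
      refine Stmt8Aux.seqMinpoly_eq monic_one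
        (Stmt8Aux.annpoly_of_seq_zero fun k => ?_) fun g _ => one_dvd g
      rw [hseq k]
      exact congrFun h0 k
  refine ⟨hpart1, ?_⟩
  have hiff : ∀ UV : Matrix (Fin b) (Fin d × Fin t) F × Matrix (Fin d × Fin t) (Fin b) F,
      (seqMinpoly (fun k => UV.1 * A ^ k * UV.2) = seqMinpoly fun k => A ^ k) ↔
        blockSum (companion d f) UV.1 UV.2 ≠ 0 := by
    intro UV
    rw [hminA]
    constructor
    · intro h hbs
      have h2 := (hpart1 UV.1 UV.2).2 hbs
      rw [h2] at h
      exact hfne1 h.symm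
    · exact (hpart1 UV.1 UV.2).1
  have hcard : Nat.card {UV : Matrix (Fin b) (Fin d × Fin t) F × Matrix (Fin d × Fin t) (Fin b) F //
      seqMinpoly (fun k => UV.1 * A ^ k * UV.2) = seqMinpoly (fun k => A ^ k)}
      = Nat.card {UV : Matrix (Fin b) (Fin d × Fin t) F × Matrix (Fin d × Fin t) (Fin b) F //
      blockSum (companion d f) UV.1 UV.2 ≠ 0} :=
    Nat.card_congr (Equiv.subtypeEquivRight hiff)
  rw [pmp, hcard]
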